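/- Suppose q : [-1,1] → ℝ is continuous, real-valued, and strictly increasing, and let Π = {λ ∈ ℂ : Im λ < 0, q(-1) < Re λ < q(1)}. Define Q(λ) = ∫_{-1}^{1} √(i(q(x) - λ)) dx with the branch fixed by Q(q(-1)) = e^{iπ/4} α, α > 0. Then Re Q'(λ) < 0 for all λ ∈ Π; in particular Q is injective on each horizontal line in Π. -/

import Mathlib

open Complex Set

/-- `Q(λ) = ∫_{-1}^1 √(i(q(x)-λ)) dx` with the branch fixed by `Q(q(-1)) ∈ e^{iπ/4}·ℝ₊`,
realized as `√(i(q(x)-λ)) = e^{iπ/4}·(q(x)-λ)^{1/2}` with the principal square root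
(note `Im(q(x)-λ) > 0` for `Im λ < 0`). -/
noncomputable def Qmodel (q : ℝ → ℝ) (lam : ℂ) : ℂ :=
  ∫ x in (-1:ℝ)..1, Complex.exp ((Real.pi : ℂ) * Complex.I / 4) *
    ((q x : ℂ) - lam) ^ ((1:ℂ)/2)

open MeasureTheory intervalIntegral Metric in
lemma re_pos_aux (z : ℂ) (hz : 0 < z.im) :
    (Complex.exp ((Real.pi:ℂ)*Complex.I/4) * ((1:ℂ)/2 * z ^ ((1:ℂ)/2 - 1) * (-1))).re < 0 := by
  have hz0 : z ≠ 0 := fun h => by simp [h] at hz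
  have harg0 : 0 < z.arg := by
    rcases lt_or_eq_of_le (Complex.arg_nonneg_iff.2 hz.le) with h | h
    · exact h
    · exfalso
      have := Complex.arg_eq_zero_iff.1 h.symm
      exact hz.ne' this.2
  have hargpi : z.arg ≤ Real.pi := Complex.arg_le_pi z
  set w : ℂ := (Real.pi:ℂ)*Complex.I/4 + Complex.log z * ((1:ℂ)/2 - 1) with hw
  have hexpr : Complex.exp ((Real.pi:ℂ)*Complex.I/4) * ((1:ℂ)/2 * z ^ ((1:ℂ)/2 - 1) * (-1))
      = -(1/2 : ℂ) * Complex.exp w := by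
    rw [Complex.cpow_def_of_ne_zero hz0, hw, Complex.exp_add]; ring
  have hwim : w.im = Real.pi/4 - z.arg/2 := by
    simp [hw, Complex.add_im, Complex.mul_im, Complex.log_im, Complex.log_re,
      Complex.div_im, Complex.div_re, Complex.sub_re, Complex.sub_im, Complex.one_re,
      Complex.one_im]
    ring
  have hcos : 0 < Real.cos w.im := by
    apply Real.cos_pos_of_mem_Ioo
    constructor
    · rw [hwim]; nlinarith [Real.pi_pos]
    · rw [hwim]; nlinarith [Real.pi_pos]
  have hre : 0 < (Complex.exp w).re := by
    rw [Complex.exp_re]; positivity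
  rw [hexpr]
  have : (-(1/2 : ℂ)) = ((-(1/2:ℝ) : ℝ) : ℂ) := by norm_num
  rw [this, Complex.re_ofReal_mul]
  nlinarith

open MeasureTheory intervalIntegral Metric in
lemma Qmodel_hasDerivAt (q : ℝ → ℝ) (hq : ContinuousOn q (Icc (-1) 1)) (lam : ℂ)
    (him : lam.im < 0) : ∃ D : ℂ, HasDerivAt (Qmodel q) D lam ∧ D.re < 0 := by
  set c₀ : ℂ := Complex.exp ((Real.pi:ℂ)*Complex.I/4) with hc₀
  set F : ℂ → ℝ → ℂ := fun x t => c₀ * ((q t : ℂ) - x) ^ ((1:ℂ)/2) with hF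
  set F' : ℂ → ℝ → ℂ := fun x t => c₀ * ((1:ℂ)/2 * ((q t : ℂ) - x) ^ ((1:ℂ)/2 - 1) * (-1))
    with hF'
  set ε : ℝ := -lam.im/2 with hε
  have hεpos : 0 < ε := by simp [hε]; linarith
  -- facts about points in the ball
  have him_ball : ∀ x ∈ ball lam ε, x.im < 0 := by
    intro x hx
    have h1 : |(x - lam).im| ≤ ‖x - lam‖ := Complex.abs_im_le_norm _
    rw [mem_ball, Complex.dist_eq] at hx
    have := abs_le.1 (h1.trans hx.le)
    simp only [Complex.sub_im] at this
    linarith [this.2]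
  have him_ball' : ∀ x ∈ ball lam ε, ∀ t : ℝ, ε ≤ ((q t : ℂ) - x).im := by
    intro x hx t
    have h1 : |(x - lam).im| ≤ ‖x - lam‖ := Complex.abs_im_le_norm _
    rw [mem_ball, Complex.dist_eq] at hx
    have := abs_le.1 (h1.trans hx.le)
    simp only [Complex.sub_im] at this ⊢
    simp only [Complex.ofReal_im]
    linarith [this.2]
  -- continuity helpers
  have hcontsub : ∀ x : ℂ, ContinuousOn (fun t => ((q t : ℂ) - x)) (Icc (-1:ℝ) 1) :=
    fun x => (Complex.continuous_ofReal.comp_continuousOn hq).sub continuousOn_const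
  have hslit : ∀ x : ℂ, x.im < 0 → ∀ t : ℝ, ((q t : ℂ) - x) ∈ Complex.slitPlane := by
    intro x hx t
    refine Or.inr ?_
    simp only [Complex.sub_im, Complex.ofReal_im]
    intro h; rw [zero_sub] at h; linarith [h ▸ hx]
  have hcontF : ∀ x : ℂ, x.im < 0 → ContinuousOn (F x) (Icc (-1:ℝ) 1) := by
    intro x hx
    exact continuousOn_const.mul (((hcontsub x).cpow_const (fun t ht => hslit x hx t)))
  have hcontF' : ∀ x : ℂ, x.im < 0 → ContinuousOn (F' x) (Icc (-1:ℝ) 1) := by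
    intro x hx
    exact continuousOn_const.mul ((continuousOn_const.mul
      ((hcontsub x).cpow_const (fun t ht => hslit x hx t))).mul continuousOn_const)
  have hsub : Set.uIoc (-1:ℝ) 1 ⊆ Icc (-1:ℝ) 1 := by
    rw [uIoc_of_le (by norm_num : (-1:ℝ) ≤ 1)]; exact Ioc_subset_Icc_self
  have habs_c₀ : ‖c₀‖ = 1 := by
    rw [hc₀, Complex.norm_exp]
    norm_num [Complex.div_re, Complex.mul_re]
  have key := intervalIntegral.hasDerivAt_integral_of_dominated_loc_of_deriv_le
    (F := F) (F' := F') (x₀ := lam) (a := (-1:ℝ)) (b := 1) (μ := MeasureTheory.volume)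
    (bound := fun _ => (1/2) * ε ^ (-(1/2) : ℝ)) (ball_mem_nhds lam hεpos)
    (Filter.eventually_of_mem (ball_mem_nhds lam hεpos) (fun x hx =>
      ((hcontF x (him_ball x hx)).mono hsub).aestronglyMeasurable measurableSet_uIoc))
    (((hcontF lam him).mono (by rw [uIcc_of_le (by norm_num : (-1:ℝ) ≤ 1)])).intervalIntegrable)
    (((hcontF' lam him).mono hsub).aestronglyMeasurable measurableSet_uIoc)
    (Filter.Eventually.of_forall (fun t _ x hx => by
      have hzim : ε ≤ ((q t : ℂ) - x).im := him_ball' x hx t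
      have hz0 : ((q t : ℂ) - x) ≠ 0 := by
        intro h; rw [h] at hzim; simp at hzim; linarith
      have habs : ε ≤ ‖(q t : ℂ) - x‖ :=
        hzim.trans ((le_abs_self _).trans (Complex.abs_im_le_norm _))
      have hcast : ((1:ℂ)/2 - 1) = ((-(1/2:ℝ) : ℝ) : ℂ) := by norm_num
      have : ‖F' x t‖ = (1/2) * ‖(q t : ℂ) - x‖ ^ (-(1/2) : ℝ) := by
        show ‖c₀ * ((1:ℂ)/2 * ((q t : ℂ) - x) ^ ((1:ℂ)/2 - 1) * (-1))‖ = _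
        rw [hcast, norm_mul, habs_c₀, norm_mul, norm_mul,
          Complex.norm_cpow_real, norm_neg, norm_one]
        norm_num
      rw [this]
      have := Real.rpow_le_rpow_of_nonpos hεpos habs (by norm_num : (-(1/2):ℝ) ≤ 0)
      nlinarith [Real.rpow_nonneg (norm_nonneg ((q t : ℂ) - x)) (-(1/2):ℝ)]))
    (intervalIntegrable_const)
    (Filter.Eventually.of_forall (fun t _ x hx => by
      have h1 : HasDerivAt (fun w : ℂ => ((q t : ℂ) - w)) (-1) x :=
        (hasDerivAt_id x).const_sub _
      exact (h1.cpow_const (hslit x (him_ball x hx) t)).const_mul c₀))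
  refine ⟨_, key.2, ?_⟩
  -- now show the real part of the integral is negative
  have hint : IntervalIntegrable (F' lam) volume (-1) 1 := key.1
  have hre : (∫ t in (-1:ℝ)..1, F' lam t).re = ∫ t in (-1:ℝ)..1, (F' lam t).re :=
    (Complex.reCLM.intervalIntegral_comp_comm hint).symm
  rw [hre]
  have hneg : ∀ t : ℝ, (F' lam t).re < 0 := by
    intro t
    apply re_pos_aux
    simp only [Complex.sub_im, Complex.ofReal_im]
    linarith
  have hintre : IntervalIntegrable (fun t => (F' lam t).re) volume (-1) 1 :=
    ((Complex.continuous_re.comp_continuousOn (hcontF' lam him)).mono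
      (by rw [uIcc_of_le (by norm_num : (-1:ℝ) ≤ 1)])).intervalIntegrable
  have hpos : 0 < ∫ t in (-1:ℝ)..1, -(F' lam t).re := by
    apply intervalIntegral.intervalIntegral_pos_of_pos_on hintre.neg
    · exact fun t _ => by simpa using hneg t
    · norm_num
  rw [intervalIntegral.integral_neg] at hpos
  linarith

/-- For `q` continuous and strictly increasing, `Re Q'(λ) < 0` throughout the semi-strip
`Π = {Im λ < 0, q(-1) < Re λ < q(1)}`; in particular `Q` is injective on each horizontal
line in `Π`. -/
theorem stmt_7 (q : ℝ → ℝ) (hq : ContinuousOn q (Icc (-1) 1))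
    (hmono : StrictMonoOn q (Icc (-1) 1)) :
    ∀ lam : ℂ, lam.im < 0 → q (-1) < lam.re → lam.re < q 1 →
      (deriv (Qmodel q) lam).re < 0 ∧
      ∀ μ : ℂ, μ.im < 0 → q (-1) < μ.re → μ.re < q 1 → μ.im = lam.im →
        Qmodel q μ = Qmodel q lam → μ = lam := by
  intro lam him hre1 hre2
  obtain ⟨D, hD, hDre⟩ := Qmodel_hasDerivAt q hq lam him
  constructor
  · rw [hD.deriv]; exact hDre
  · intro μ hμim hμ1 hμ2 hμlam hQ
    -- g t = Re (Qmodel q (t + i·(lam.im)))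
    set c : ℂ := (lam.im : ℂ) * Complex.I with hc
    have hzim : ∀ t : ℝ, ((t : ℂ) + c).im = lam.im := by
      intro t; simp [hc]
    set g : ℝ → ℝ := fun t => (Qmodel q ((t : ℂ) + c)).re with hg
    have hgderiv : ∀ t : ℝ, t ∈ Ioo (q (-1)) (q 1) →
        ∃ d : ℝ, HasDerivAt g d t ∧ d < 0 := by
      intro t ht
      obtain ⟨D', hD', hD're⟩ := Qmodel_hasDerivAt q hq ((t : ℂ) + c) (by rw [hzim]; exact him)
      have h1 : HasDerivAt (fun w : ℂ => Qmodel q (w + c)) (D' * 1) (t : ℂ) :=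
        HasDerivAt.comp (h := fun w : ℂ => w + c) (t : ℂ) hD' ((hasDerivAt_id' (x := (t : ℂ))).add_const c)
      have h2 : HasDerivAt (fun y : ℝ => Qmodel q ((y : ℂ) + c)) (D' * 1) t :=
        h1.comp_ofReal
      have h3 : HasDerivAt g ((D' * 1).re) t :=
        (Complex.reCLM.hasFDerivAt.comp_hasDerivAt t h2)
      exact ⟨_, h3, by simpa using hD're⟩
    have hanti : StrictAntiOn g (Ioo (q (-1)) (q 1)) := by
      apply strictAntiOn_of_deriv_neg (convex_Ioo _ _)
      · intro t ht
        obtain ⟨d, hd, _⟩ := hgderiv t ht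
        exact hd.continuousAt.continuousWithinAt
      · intro t ht
        rw [interior_Ioo] at ht
        obtain ⟨d, hd, hdneg⟩ := hgderiv t ht
        rw [hd.deriv]; exact hdneg
    have hmu : ((μ.re : ℂ) + c) = μ := by
      apply Complex.ext <;> simp [hc, hμlam]
    have hlam : ((lam.re : ℂ) + c) = lam := by
      apply Complex.ext <;> simp [hc]
    have hgeq : g μ.re = g lam.re := by
      rw [hg]; simp only [hmu, hlam, hQ]
    have := hanti.injOn ⟨hμ1, hμ2⟩ ⟨hre1, hre2⟩ hgeq
    apply Complex.ext
    · exact this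
    · rw [hμlam]
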